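/- There exists an infinite square-free word over a three-letter alphabet: a function w : ℕ → Fin 3 such that no nonempty word u satisfies that uu is a factor of w. -/
import Mathlib


/-- A finite word `u` is a factor of the infinite word `w` if it occurs as a
contiguous subword of `w`. -/
def IsFactorOf {α : Type*} (u : List α) (w : ℕ → α) : Prop :=
  ∃ i : ℕ, u = (List.range u.length).map (fun j => w (i + j))

/-- The Thue–Morse word: parity of the binary digit sum. -/
def tmw (n : ℕ) : Bool := decide ((Nat.digits 2 n).sum % 2 = 1)

lemma tmw_two_mul (n : ℕ) : tmw (2*n) = tmw n := by
  rcases Nat.eq_zero_or_pos n with rfl | hn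
  · rfl
  · unfold tmw
    rw [Nat.digits_def' (by norm_num : (1:ℕ) < 2) (by omega)]
    simp [Nat.mul_mod_right, Nat.mul_div_cancel_left _ (by norm_num : 0 < 2)]

lemma tmw_two_mul_add_one (n : ℕ) : tmw (2*n+1) = !tmw n := by
  unfold tmw
  rw [Nat.digits_def' (by norm_num : (1:ℕ) < 2) (by omega)]
  have h2 : (2*n+1) % 2 = 1 := by omega
  have h3 : (2*n+1) / 2 = n := by omega
  rw [h2, h3, ← decide_not, decide_eq_decide]
  simp only [List.sum_cons]
  omega

lemma tmw_even_ne (x : ℕ) (hx : x % 2 = 0) : tmw x ≠ tmw (x+1) := by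
  obtain ⟨n, rfl⟩ : ∃ n, x = 2*n := ⟨x/2, by omega⟩
  rw [tmw_two_mul_add_one, tmw_two_mul]
  simp

/-- No three equal consecutive values in the Thue–Morse word. -/
lemma tmw_no3 (m : ℕ) : ¬ (tmw m = tmw (m+1) ∧ tmw (m+1) = tmw (m+2)) := by
  rintro ⟨h1, h2⟩
  rcases Nat.even_or_odd m with ⟨a, ha⟩ | ⟨a, ha⟩
  · exact tmw_even_ne m (by omega) h1
  · exact tmw_even_ne (m+1) (by omega) h2

/-- The Thue–Morse word is overlap-free. -/
lemma tmw_overlap_free : ∀ k, 1 ≤ k → ∀ i, ¬ (∀ j ≤ k, tmw (i+j) = tmw (i+j+k)) := by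
  intro k
  induction k using Nat.strong_induction_on with
  | _ k ih =>
  intro hk i h
  have btrans : ∀ a b c : Bool, a ≠ b → b ≠ c → a = c := by decide
  rcases Nat.even_or_odd k with ⟨m, hkm⟩ | ⟨m, hkm⟩
  · -- k = m + m, m ≥ 1: reduce to an overlap of half the length
    have hm1 : 1 ≤ m := by omega
    rcases Nat.even_or_odd i with ⟨a, hia⟩ | ⟨a, hia⟩
    · refine ih m (by omega) hm1 a (fun j hj => ?_)
      have := h (2*j) (by omega)
      rw [show i + 2*j + k = 2*(a+j+m) from by omega,
        show i + 2*j = 2*(a+j) from by omega, tmw_two_mul, tmw_two_mul] at this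
      exact this
    · refine ih m (by omega) hm1 a (fun j hj => ?_)
      have := h (2*j) (by omega)
      rw [show i + 2*j + k = 2*(a+j+m)+1 from by omega,
        show i + 2*j = 2*(a+j)+1 from by omega,
        tmw_two_mul_add_one, tmw_two_mul_add_one] at this
      simpa using this
  · rcases Nat.eq_zero_or_pos m with rfl | hm1
    · -- k = 1
      have h0 := h 0 (by omega)
      have h1 := h 1 (by omega)
      simp only [Nat.add_zero] at h0
      exact tmw_no3 i ⟨by simpa [hkm] using h0, by
        have : i + 1 + 1 = i + 2 := by omega
        simpa [hkm, this] using h1⟩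
    · -- k odd ≥ 3: alternation then contradiction
      have hk3 : 3 ≤ k := by omega
      have alt1 : ∀ j, j + 1 ≤ k → tmw (i+j) ≠ tmw (i+j+1) ∧ tmw (i+j+k) ≠ tmw (i+j+k+1) := by
        intro j hj
        have e1 := h j (by omega)
        have e2 := h (j+1) (by omega)
        have e2' : tmw (i+j+1) = tmw (i+j+k+1) := by
          rw [show i + (j+1) + k = i + j + k + 1 from by omega,
            show i + (j+1) = i + j + 1 from by omega] at e2
          exact e2
        rcases Nat.even_or_odd (i+j) with ⟨c, hc⟩ | ⟨c, hc⟩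
        · have d1 : tmw (i+j) ≠ tmw (i+j+1) := tmw_even_ne _ (by omega)
          refine ⟨d1, fun hhc => d1 ?_⟩
          rw [e1, hhc, ← e2']
        · have d2 : tmw (i+j+k) ≠ tmw (i+j+k+1) := tmw_even_ne _ (by omega)
          refine ⟨fun hhc => d2 ?_, d2⟩
          rw [← e1, hhc, e2']
      have alt : ∀ x, i ≤ x → x < i + 2*k → tmw x ≠ tmw (x+1) := by
        intro x hx1 hx2
        rcases lt_or_ge x (i+k) with hx | hx
        · have := (alt1 (x - i) (by omega)).1
          have e : i + (x-i) = x := by omega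
          rwa [e] at this
        · have := (alt1 (x - i - k) (by omega)).2
          have e : i + (x-i-k) + k = x := by omega
          rwa [e] at this
      obtain ⟨n, hy⟩ : ∃ n, (2*n = i ∨ 2*n = i + 1) := by
        rcases Nat.even_or_odd i with ⟨a, ha⟩ | ⟨a, ha⟩
        · exact ⟨a, Or.inl (by omega)⟩
        · exact ⟨a+1, Or.inr (by omega)⟩
      have a0 := alt (2*n) (by omega) (by omega)
      have a1 := alt (2*n+1) (by omega) (by omega)
      have a2 := alt (2*n+2) (by omega) (by omega)
      have a3 := alt (2*n+3) (by omega) (by omega)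
      have b02 : tmw (2*n) = tmw (2*n+2) := btrans _ _ _ a0 a1
      have b24 : tmw (2*n+2) = tmw (2*n+4) := by
        have := btrans _ _ _ a2 a3
        simpa [show 2*n+2+1+1 = 2*n+4 by omega, show 2*n+2+1 = 2*n+3 by omega] using this
      apply tmw_no3 n
      constructor
      · have e1 : 2*n+2 = 2*(n+1) := by omega
        rw [e1, tmw_two_mul] at b02
        rwa [tmw_two_mul] at b02
      · have e1 : 2*n+2 = 2*(n+1) := by omega
        have e2 : 2*n+4 = 2*(n+2) := by omega
        rw [e1, e2, tmw_two_mul, tmw_two_mul] at b24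
        exact b24

/-- Thue's ternary word, obtained by coding consecutive pairs of the
Thue–Morse word. -/
def w3 (n : ℕ) : Fin 3 :=
  if tmw n = tmw (n+1) then 0 else if tmw (n+1) then 1 else 2

/-- The ternary word `w3` is square-free. -/
lemma w3_square_free (i k : ℕ) (hk : 1 ≤ k)
    (hsq : ∀ j < k, w3 (i+j) = w3 (i+j+k)) : False := by
  have inv : ∀ j ≤ k, (tmw (i+j) == tmw (i+j+k)) = (tmw i == tmw (i+k)) := by
    intro j hj
    induction j with
    | zero => simp
    | succ j IH =>
      have hw := hsq j (by omega)
      have hIH := IH (by omega)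
      simp only [w3] at hw
      rw [show i+(j+1)+k = i+j+k+1 from by omega, show i+(j+1) = i+j+1 from by omega]
      cases h1 : tmw (i+j) <;> cases h2 : tmw (i+j+1) <;>
        cases h3 : tmw (i+j+k) <;> cases h4 : tmw (i+j+k+1) <;> simp_all
  cases hc : (tmw i == tmw (i+k))
  · have hne : ∀ j ≤ k, tmw (i+j) ≠ tmw (i+j+k) := by
      intro j hj
      have := inv j hj
      rw [hc] at this
      simpa using this
    have const : ∀ j ≤ k, tmw (i+j) = tmw i := by
      intro j hj
      induction j with
      | zero => simp
      | succ j IH =>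
        have hw := hsq j (by omega)
        have hnej := hne j (by omega)
        simp only [w3] at hw
        rw [show i+(j+1) = i+j+1 from by omega]
        have hIH := IH (by omega)
        cases h1 : tmw (i+j) <;> cases h2 : tmw (i+j+1) <;>
          cases h3 : tmw (i+j+k) <;> cases h4 : tmw (i+j+k+1) <;> simp_all
    have h0 := hne 0 (by omega)
    have hK := const k le_rfl
    simp at h0
    exact h0 (by rw [hK])
  · refine tmw_overlap_free k hk i (fun j hj => ?_)
    have := inv j hj
    rw [hc] at this
    simpa using this

theorem stmt_8 :
    ∃ w : ℕ → Fin 3, ∀ u : List (Fin 3), u ≠ [] → ¬ IsFactorOf (u ++ u) w := by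
  refine ⟨w3, fun u hu hfac => ?_⟩
  obtain ⟨i, hi⟩ := hfac
  have hk : 1 ≤ u.length := List.length_pos_iff.mpr hu
  have hlen : (u ++ u).length = u.length + u.length := by simp
  have hget : ∀ j (hj : j < (u ++ u).length), (u ++ u)[j] = w3 (i + j) := by
    intro j hj
    rw [List.getElem_of_eq hi hj, List.getElem_map, List.getElem_range]
  refine w3_square_free i u.length hk (fun j hj => ?_)
  have h1 : (u ++ u)[j]'(by omega) = w3 (i + j) := hget j (by omega)
  have h2 : (u ++ u)[j + u.length]'(by omega) = w3 (i + (j + u.length)) :=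
    hget (j + u.length) (by omega)
  rw [List.getElem_append_left (by omega)] at h1
  rw [List.getElem_append_right (by omega)] at h2
  simp only [Nat.add_sub_cancel] at h2
  rw [show i + j + u.length = i + (j + u.length) from by omega]
  exact h1.symm.trans h2
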